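/- Let p be an odd prime and 0 ≤ k ≤ (p-1)/2. Then, as elements of Z_p (p-adic integers), the quotient ((1-p)/2)_k * ((1+p)/2)_k / ((1+p/2)_k * (1-p/2)_k) is congruent modulo p^4 to ((1/2)_k / (1)_k)^2 * (1 + p^2 * sum_{j=1}^{k} (1/(2j)^2 - 1/(2j-1)^2)). -/

import Mathlib

/-- The Pochhammer symbol (rising factorial): `(a)_k = a(a+1)⋯(a+k-1)`. -/
def poch {R : Type*} [CommRing R] (a : R) (k : ℕ) : R :=
  ∏ i ∈ Finset.range k, (a + i)

section Aux

variable {p : ℕ} [hp : Fact p.Prime]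

private lemma norm_nat_eq_one {n : ℕ} (h0 : 0 < n) (hlt : n < p) : ‖(n : ℚ_[p])‖ = 1 := by
  have h1 : ‖((n : ℤ) : ℚ_[p])‖ ≤ 1 := Padic.norm_int_le_one n
  have h2 : ¬ ((p : ℤ) ∣ (n : ℤ)) := by
    rw [Int.natCast_dvd_natCast]
    exact fun hd => absurd (Nat.le_of_dvd h0 hd) (not_le.mpr hlt)
  have h3 : ¬ ‖((n : ℤ) : ℚ_[p])‖ < 1 := fun h =>
    h2 ((Padic.norm_intCast_lt_one_iff (k := n)).mp h)
  push_cast at h1 h3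
  exact le_antisymm h1 (not_lt.mp h3)

private lemma norm_sum_le_one (s : Finset ℕ) (x : ℕ → ℚ_[p]) (hx : ∀ i ∈ s, ‖x i‖ ≤ 1) :
    ‖∑ i ∈ s, x i‖ ≤ 1 := by
  induction s using Finset.cons_induction with
  | empty => simp
  | cons a s ha ih =>
    rw [Finset.sum_cons]
    exact le_trans (Padic.nonarchimedean _ _)
      (max_le (hx a (Finset.mem_cons_self a s)) (ih fun i hi => hx i (Finset.mem_cons_of_mem hi)))

private lemma key (c : ℚ_[p]) (hc : ‖c‖ ≤ 1) (x : ℕ → ℚ_[p]) (k : ℕ)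
    (hx : ∀ i ∈ Finset.range k, ‖x i‖ ≤ 1) :
    ‖∏ i ∈ Finset.range k, (1 + c * x i) - (1 + c * ∑ i ∈ Finset.range k, x i)‖ ≤ ‖c‖ ^ 2 := by
  induction k with
  | zero => simpa using sq_nonneg ‖c‖
  | succ n ih =>
    have hx' : ∀ i ∈ Finset.range n, ‖x i‖ ≤ 1 := fun i hi =>
      hx i (Finset.mem_range.mpr (lt_trans (Finset.mem_range.mp hi) (Nat.lt_succ_self n)))
    have hxn : ‖x n‖ ≤ 1 := hx n (Finset.mem_range.mpr (Nat.lt_succ_self n))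
    have hS : ‖∑ i ∈ Finset.range n, x i‖ ≤ 1 := norm_sum_le_one _ _ hx'
    rw [Finset.prod_range_succ, Finset.sum_range_succ]
    have heq : (∏ i ∈ Finset.range n, (1 + c * x i)) * (1 + c * x n)
        - (1 + c * ((∑ i ∈ Finset.range n, x i) + x n)) =
        ((∏ i ∈ Finset.range n, (1 + c * x i)) - (1 + c * ∑ i ∈ Finset.range n, x i))
          * (1 + c * x n) + c * (c * ((∑ i ∈ Finset.range n, x i) * x n)) := by ring
    rw [heq]
    have h1 : ‖1 + c * x n‖ ≤ 1 := by
      refine le_trans (Padic.nonarchimedean _ _) (max_le (by simp) ?_)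
      calc ‖c * x n‖ = ‖c‖ * ‖x n‖ := norm_mul _ _
        _ ≤ 1 * 1 := mul_le_mul hc hxn (norm_nonneg _) zero_le_one
        _ = 1 := one_mul 1
    refine le_trans (Padic.nonarchimedean _ _) (max_le ?_ ?_)
    · rw [norm_mul]
      calc ‖(∏ i ∈ Finset.range n, (1 + c * x i)) - (1 + c * ∑ i ∈ Finset.range n, x i)‖
            * ‖1 + c * x n‖ ≤ ‖c‖ ^ 2 * 1 :=
          mul_le_mul (ih hx') h1 (norm_nonneg _) (by positivity)
        _ = ‖c‖ ^ 2 := mul_one _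
    · rw [norm_mul, norm_mul, norm_mul]
      have hSx : ‖∑ i ∈ Finset.range n, x i‖ * ‖x n‖ ≤ 1 := by
        nlinarith [norm_nonneg (x n), norm_nonneg (∑ i ∈ Finset.range n, x i)]
      calc ‖c‖ * (‖c‖ * (‖∑ i ∈ Finset.range n, x i‖ * ‖x n‖)) ≤ ‖c‖ * (‖c‖ * 1) := by
            gcongr
        _ = ‖c‖ ^ 2 := by ring

private lemma sum_Icc_one {M : Type*} [AddCommMonoid M] (f : ℕ → M) (k : ℕ) :
    ∑ j ∈ Finset.Icc 1 k, f j = ∑ i ∈ Finset.range k, f (i + 1) := by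
  induction k with
  | zero => simp
  | succ n ih =>
    rw [Finset.sum_Icc_succ_top (Nat.le_add_left 1 n), ih, Finset.sum_range_succ]

end Aux

theorem stmt9 (p : ℕ) [hp : Fact p.Prime] (hodd : Odd p) (k : ℕ) (hk : k ≤ (p - 1) / 2) :
    ‖poch (((1 : ℚ_[p]) - p) / 2) k * poch (((1 : ℚ_[p]) + p) / 2) k /
        (poch ((1 : ℚ_[p]) + p / 2) k * poch ((1 : ℚ_[p]) - p / 2) k) -
      (poch ((1 : ℚ_[p]) / 2) k / poch (1 : ℚ_[p]) k) ^ 2 *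
        (1 + (p : ℚ_[p]) ^ 2 *
          ∑ j ∈ Finset.Icc 1 k, ((1 : ℚ_[p]) / (2 * j) ^ 2 - 1 / (2 * j - 1) ^ 2))‖ ≤
      (p : ℝ) ^ (-4 : ℤ) := by
  obtain ⟨m, hm⟩ := hodd
  have hkm : k ≤ m := by omega
  have hp2 : 2 ≤ p := hp.out.two_le
  have hpR : (1 : ℝ) < (p : ℝ) := by exact_mod_cast hp.out.one_lt
  have hpR0 : (0 : ℝ) < (p : ℝ) := by linarith
  set U : ℕ → ℚ_[p] := fun i => ((2 * i + 1 : ℕ) : ℚ_[p]) with hUdef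
  set V : ℕ → ℚ_[p] := fun i => ((2 * i + 2 : ℕ) : ℚ_[p]) with hVdef
  have hnU : ∀ i ∈ Finset.range k, ‖U i‖ = 1 := by
    intro i hi
    have hik := Finset.mem_range.mp hi
    exact norm_nat_eq_one (by omega) (by omega)
  have hnV : ∀ i ∈ Finset.range k, ‖V i‖ = 1 := by
    intro i hi
    have hik := Finset.mem_range.mp hi
    exact norm_nat_eq_one (by omega) (by omega)
  have hU0 : ∀ i ∈ Finset.range k, U i ≠ 0 := by
    intro i hi h
    have := hnU i hi
    rw [h] at this; simp at this
  have hV0 : ∀ i ∈ Finset.range k, V i ≠ 0 := by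
    intro i hi h
    have := hnV i hi
    rw [h] at this; simp at this
  set A := ∏ i ∈ Finset.range k, (U i) ^ 2 with hAdef
  set B := ∏ i ∈ Finset.range k, (V i) ^ 2 with hBdef
  set Pa := ∏ i ∈ Finset.range k, (1 + (-(p : ℚ_[p]) ^ 2) * ((U i) ^ 2)⁻¹) with hPadef
  set Pb := ∏ i ∈ Finset.range k, (1 + (-(p : ℚ_[p]) ^ 2) * ((V i) ^ 2)⁻¹) with hPbdef
  set Sa := ∑ i ∈ Finset.range k, ((U i) ^ 2)⁻¹ with hSadef
  set Sb := ∑ i ∈ Finset.range k, ((V i) ^ 2)⁻¹ with hSbdef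
  have hnp : ‖(p : ℚ_[p])‖ = ((p : ℝ))⁻¹ := Padic.norm_p
  have hnfac : ∀ w : ℚ_[p], ‖w‖ = 1 → ‖1 + (-(p : ℚ_[p]) ^ 2) * (w ^ 2)⁻¹‖ = 1 := by
    intro w hw
    have hsmall : ‖(-(p : ℚ_[p]) ^ 2) * (w ^ 2)⁻¹‖ < 1 := by
      rw [norm_mul, norm_neg, norm_pow, norm_inv, norm_pow, hw, hnp]
      simp only [inv_one, one_pow, mul_one]
      have h01 : (p : ℝ)⁻¹ < 1 := inv_lt_one_of_one_lt₀ hpR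
      exact pow_lt_one₀ (by positivity) h01 (by norm_num)
    have hne : ‖(1 : ℚ_[p])‖ ≠ ‖(-(p : ℚ_[p]) ^ 2) * (w ^ 2)⁻¹‖ := by
      rw [norm_one]; exact (ne_of_lt hsmall).symm
    rw [Padic.add_eq_max_of_ne hne, norm_one]
    exact max_eq_left (le_of_lt hsmall)
  have hnA : ‖A‖ = 1 := by
    rw [hAdef, norm_prod]
    exact Finset.prod_eq_one fun i hi => by rw [norm_pow, hnU i hi, one_pow]
  have hnB : ‖B‖ = 1 := by
    rw [hBdef, norm_prod]
    exact Finset.prod_eq_one fun i hi => by rw [norm_pow, hnV i hi, one_pow]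
  have hnPb : ‖Pb‖ = 1 := by
    rw [hPbdef, norm_prod]
    exact Finset.prod_eq_one fun i hi => hnfac _ (hnV i hi)
  have hB0 : B ≠ 0 := fun h => by rw [h] at hnB; simp at hnB
  have hPb0 : Pb ≠ 0 := fun h => by rw [h] at hnPb; simp at hnPb
  have hnSa : ‖Sa‖ ≤ 1 := by
    refine norm_sum_le_one _ _ fun i hi => ?_
    rw [norm_inv, norm_pow, hnU i hi]; norm_num
  have hnSb : ‖Sb‖ ≤ 1 := by
    refine norm_sum_le_one _ _ fun i hi => ?_
    rw [norm_inv, norm_pow, hnV i hi]; norm_num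
  -- rewrite numerator product
  have hnum : poch (((1 : ℚ_[p]) - p) / 2) k * poch (((1 : ℚ_[p]) + p) / 2) k
      = (A * Pa) / 4 ^ k := by
    unfold poch
    rw [← Finset.prod_mul_distrib]
    have hfac : ∀ i ∈ Finset.range k,
        (((1 : ℚ_[p]) - p) / 2 + i) * (((1 : ℚ_[p]) + p) / 2 + i)
          = ((U i) ^ 2 * (1 + (-(p : ℚ_[p]) ^ 2) * ((U i) ^ 2)⁻¹)) / 4 := by
      intro i hi
      have h0 : (U i) ^ 2 ≠ 0 := pow_ne_zero 2 (hU0 i hi)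
      have hUinv : (U i) ^ 2 * ((U i) ^ 2)⁻¹ = 1 := mul_inv_cancel₀ h0
      have hexp : (U i) ^ 2 * (1 + (-(p : ℚ_[p]) ^ 2) * ((U i) ^ 2)⁻¹)
          = (U i) ^ 2 - (p : ℚ_[p]) ^ 2 := by
        linear_combination (-(p : ℚ_[p]) ^ 2) * hUinv
      rw [hexp, hUdef]
      push_cast
      ring
    rw [Finset.prod_congr rfl hfac, Finset.prod_div_distrib, Finset.prod_const, Finset.card_range,
      hAdef, hPadef, ← Finset.prod_mul_distrib]
  have hden : poch ((1 : ℚ_[p]) + p / 2) k * poch ((1 : ℚ_[p]) - p / 2) k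
      = (B * Pb) / 4 ^ k := by
    unfold poch
    rw [← Finset.prod_mul_distrib]
    have hfac : ∀ i ∈ Finset.range k,
        ((1 : ℚ_[p]) + p / 2 + i) * ((1 : ℚ_[p]) - p / 2 + i)
          = ((V i) ^ 2 * (1 + (-(p : ℚ_[p]) ^ 2) * ((V i) ^ 2)⁻¹)) / 4 := by
      intro i hi
      have h0 : (V i) ^ 2 ≠ 0 := pow_ne_zero 2 (hV0 i hi)
      have hVinv : (V i) ^ 2 * ((V i) ^ 2)⁻¹ = 1 := mul_inv_cancel₀ h0
      have hexp : (V i) ^ 2 * (1 + (-(p : ℚ_[p]) ^ 2) * ((V i) ^ 2)⁻¹)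
          = (V i) ^ 2 - (p : ℚ_[p]) ^ 2 := by
        linear_combination (-(p : ℚ_[p]) ^ 2) * hVinv
      rw [hexp, hVdef]
      push_cast
      ring
    rw [Finset.prod_congr rfl hfac, Finset.prod_div_distrib, Finset.prod_const, Finset.card_range,
      hBdef, hPbdef, ← Finset.prod_mul_distrib]
  have h4k : ((4 : ℚ_[p]) ^ k) ≠ 0 := pow_ne_zero k (by norm_num)
  have hQ : poch (((1 : ℚ_[p]) - p) / 2) k * poch (((1 : ℚ_[p]) + p) / 2) k /
      (poch ((1 : ℚ_[p]) + p / 2) k * poch ((1 : ℚ_[p]) - p / 2) k) = (A * Pa) / (B * Pb) := by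
    rw [hnum, hden, div_div_div_cancel_right₀]
    exact h4k
  -- main term
  have hmain : (poch ((1 : ℚ_[p]) / 2) k / poch (1 : ℚ_[p]) k) ^ 2 = A / B := by
    unfold poch
    have e1 : ∀ i ∈ Finset.range k, ((1 : ℚ_[p]) / 2 + i) = U i / 2 := by
      intro i hi; rw [hUdef]; push_cast; ring
    have e2 : ∀ i ∈ Finset.range k, ((1 : ℚ_[p]) + i) = V i / 2 := by
      intro i hi; rw [hVdef]; push_cast; ring
    rw [Finset.prod_congr rfl e1, Finset.prod_congr rfl e2,
      Finset.prod_div_distrib, Finset.prod_div_distrib, Finset.prod_const, Finset.card_range]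
    have h2k : ((2 : ℚ_[p]) ^ k) ≠ 0 := pow_ne_zero k (by norm_num)
    rw [div_div_div_cancel_right₀ h2k, div_pow, hAdef, hBdef,
      Finset.prod_pow, Finset.prod_pow]
  -- rewrite the sum
  have hT : (∑ j ∈ Finset.Icc 1 k, ((1 : ℚ_[p]) / (2 * j) ^ 2 - 1 / (2 * j - 1) ^ 2))
      = Sb - Sa := by
    rw [sum_Icc_one, hSbdef, hSadef, ← Finset.sum_sub_distrib]
    refine Finset.sum_congr rfl fun i hi => ?_
    have e1 : (2 * ((i + 1 : ℕ) : ℚ_[p])) ^ 2 = (V i) ^ 2 := by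
      rw [hVdef]; push_cast; ring
    have e2 : (2 * ((i + 1 : ℕ) : ℚ_[p]) - 1) ^ 2 = (U i) ^ 2 := by
      rw [hUdef]; push_cast; ring
    rw [one_div, one_div, e1, e2]
  rw [hQ, hmain, hT]
  -- split off the unit factor
  set T : ℚ_[p] := 1 + (p : ℚ_[p]) ^ 2 * (Sb - Sa) with hTdef
  have hsplit : A * Pa / (B * Pb) - A / B * T = A / B * ((Pa - T * Pb) / Pb) := by
    field_simp
  rw [hsplit, norm_mul, norm_div, norm_div, hnA, hnB, hnPb, div_one, div_one, one_mul]
  -- now bound ‖Pa - T * Pb‖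
  have hc : ‖-(p : ℚ_[p]) ^ 2‖ ≤ 1 := by
    rw [norm_neg, norm_pow, hnp]
    calc ((p : ℝ))⁻¹ ^ 2 ≤ 1 ^ 2 := by
          gcongr
          exact le_of_lt (inv_lt_one_of_one_lt₀ hpR)
      _ = 1 := one_pow 2
  have hE1 : ‖Pa - (1 + (-(p : ℚ_[p]) ^ 2) * Sa)‖ ≤ ‖-(p : ℚ_[p]) ^ 2‖ ^ 2 := by
    rw [hPadef, hSadef]
    exact key _ hc _ k fun i hi => by rw [norm_inv, norm_pow, hnU i hi]; norm_num
  have hE2 : ‖Pb - (1 + (-(p : ℚ_[p]) ^ 2) * Sb)‖ ≤ ‖-(p : ℚ_[p]) ^ 2‖ ^ 2 := by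
    rw [hPbdef, hSbdef]
    exact key _ hc _ k fun i hi => by rw [norm_inv, norm_pow, hnV i hi]; norm_num
  have hcc : ‖-(p : ℚ_[p]) ^ 2‖ ^ 2 = (p : ℝ) ^ (-4 : ℤ) := by
    rw [norm_neg, norm_pow, hnp, ← pow_mul, inv_pow, zpow_neg]
    norm_num
  have hSbSa : ‖Sb - Sa‖ ≤ 1 := by
    rw [sub_eq_add_neg]
    refine le_trans (Padic.nonarchimedean _ _) (max_le hnSb ?_)
    rw [norm_neg]; exact hnSa
  have hnT : ‖T‖ ≤ 1 := by
    rw [hTdef]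
    refine le_trans (Padic.nonarchimedean _ _) (max_le (by simp) ?_)
    rw [norm_mul, norm_pow, hnp]
    calc ((p : ℝ))⁻¹ ^ 2 * ‖Sb - Sa‖ ≤ 1 ^ 2 * 1 := by
          gcongr
          exact le_of_lt (inv_lt_one_of_one_lt₀ hpR)
      _ = 1 := by norm_num
  have hid : Pa - T * Pb =
      ((Pa - (1 + (-(p : ℚ_[p]) ^ 2) * Sa)) + -(T * (Pb - (1 + (-(p : ℚ_[p]) ^ 2) * Sb)))) +
        (-(p : ℚ_[p]) ^ 2) * ((-(p : ℚ_[p]) ^ 2) * ((Sb - Sa) * Sb)) := by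
    rw [hTdef]; ring
  rw [hid]
  refine le_trans (Padic.nonarchimedean _ _) (max_le (le_trans (Padic.nonarchimedean _ _) (max_le ?_ ?_)) ?_)
  · rw [← hcc]; exact hE1
  · rw [norm_neg, norm_mul]
    calc ‖T‖ * ‖Pb - (1 + (-(p : ℚ_[p]) ^ 2) * Sb)‖ ≤ 1 * (‖-(p : ℚ_[p]) ^ 2‖ ^ 2) := by
          gcongr
      _ = (p : ℝ) ^ (-4 : ℤ) := by rw [one_mul, hcc]
  · rw [norm_mul, norm_mul, ← hcc]
    have h1 : ‖(Sb - Sa) * Sb‖ ≤ 1 := by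
      rw [norm_mul]
      calc ‖Sb - Sa‖ * ‖Sb‖ ≤ 1 * 1 := by gcongr
        _ = 1 := one_mul 1
    calc ‖-(p : ℚ_[p]) ^ 2‖ * (‖-(p : ℚ_[p]) ^ 2‖ * ‖(Sb - Sa) * Sb‖)
          ≤ ‖-(p : ℚ_[p]) ^ 2‖ * (‖-(p : ℚ_[p]) ^ 2‖ * 1) := by gcongr
      _ = ‖-(p : ℚ_[p]) ^ 2‖ ^ 2 := by ring
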